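/- Let θ ∈ ℝ with sin θ ≠ 0, set [m] := sin(mθ)/sin θ for m ∈ ℤ and μ(s,t) := [s][t][s−t][s+t]. Let s, t ∈ ℤ be such that [s−t], [s−t+1], [s−t−1], [s+t], [s+t+1], [s+t+2], μ(s,t), μ(s+1,t), μ(s,t+1) and μ(s+1,t+1) are all strictly positive. Define the real 2×2 matrices U := (1/[s−t]) · [[ [s−t+1], √([s−t+1][s−t−1]) ], [ √([s−t+1][s−t−1]), [s−t−1] ]] and B := [[ ([s−t+1]/[s−t])·√(μ(s+1,t+1)/μ(s,t)), (√([s+t][s+t+2])/[s+t+1])·√(μ(s+1,t)·μ(s,t+1))/μ(s,t) ], [ (√([s+t][s+t+2])/[s+t+1])·√(μ(s+1,t)·μ(s,t+1))/μ(s,t), ([s−t−1]/[s−t])·√(μ(s+1,t+1)/μ(s,t)) ]]. Then U·B = [2]·B. -/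

import Mathlib

/-- Trigonometric quantum integer `[m] = sin(mθ)/sin θ`. -/
noncomputable def qit (θ : ℝ) (m : ℤ) : ℝ := Real.sin (m * θ) / Real.sin θ

/-- Frobenius–Perron weight `μ(s,t) = [s][t][s−t][s+t]`. -/
noncomputable def fpw (θ : ℝ) (s t : ℤ) : ℝ :=
  qit θ s * qit θ t * qit θ (s - t) * qit θ (s + t)

/-- The U-cell matrix U^a_{a+ε₁+ε₂}. -/
noncomputable def Umat (θ : ℝ) (s t : ℤ) : Matrix (Fin 2) (Fin 2) ℝ :=
  (1 / qit θ (s - t)) •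
    !![qit θ (s - t + 1), Real.sqrt (qit θ (s - t + 1) * qit θ (s - t - 1));
       Real.sqrt (qit θ (s - t + 1) * qit θ (s - t - 1)), qit θ (s - t - 1)]

/-- The B-cell matrix B_{a,_,a+ε₁+ε₂,_} (up to normalisation). -/
noncomputable def Bmat (θ : ℝ) (s t : ℤ) : Matrix (Fin 2) (Fin 2) ℝ :=
  !![(qit θ (s - t + 1) / qit θ (s - t)) *
        Real.sqrt (fpw θ (s + 1) (t + 1) / fpw θ s t),
     (Real.sqrt (qit θ (s + t) * qit θ (s + t + 2)) / qit θ (s + t + 1)) *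
        Real.sqrt (fpw θ (s + 1) t * fpw θ s (t + 1)) / fpw θ s t;
     (Real.sqrt (qit θ (s + t) * qit θ (s + t + 2)) / qit θ (s + t + 1)) *
        Real.sqrt (fpw θ (s + 1) t * fpw θ s (t + 1)) / fpw θ s t,
     (qit θ (s - t - 1) / qit θ (s - t)) *
        Real.sqrt (fpw θ (s + 1) (t + 1) / fpw θ s t)]

lemma qit_two_mul (θ : ℝ) (n : ℤ) : qit θ 2 * qit θ n = qit θ (n + 1) + qit θ (n - 1) := by
  unfold qit
  push_cast
  rw [add_mul, sub_mul, one_mul, Real.sin_add, Real.sin_sub,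
    show ((2:ℝ)) * θ = θ + θ by ring, Real.sin_add]
  by_cases h : Real.sin θ = 0
  · simp [h]
  · field_simp; ring

lemma aux_mat (A P M R X Y q2 : ℝ) (hA : A ≠ 0) (k1 : q2 * A = P + M)
    (k2 : A * Y = R * X) (k3 : R ^ 2 = P * M) :
    (1 / A) • !![P, R; R, M] * !![(P / A) * X, Y; Y, (M / A) * X] =
      q2 • !![(P / A) * X, Y; Y, (M / A) * X] := by
  ext i j
  fin_cases i <;> fin_cases j
  · simp [Matrix.mul_apply, Fin.sum_univ_two, Matrix.smul_apply]
    field_simp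
    linear_combination R*k2 + X*k3 - (P*X)*k1
  · simp [Matrix.mul_apply, Fin.sum_univ_two, Matrix.smul_apply]
    field_simp
    linear_combination (-(Y*A))*k1 - M*k2
  · simp [Matrix.mul_apply, Fin.sum_univ_two, Matrix.smul_apply]
    field_simp
    linear_combination (-(Y*A))*k1 - P*k2
  · simp [Matrix.mul_apply, Fin.sum_univ_two, Matrix.smul_apply]
    field_simp
    linear_combination R*k2 + X*k3 - (M*X)*k1


/-- Braid absorption (BA): B is an eigenmatrix of U with eigenvalue [2]. -/
theorem braid_absorption_eps1_eps2 (θ : ℝ) (hθ : Real.sin θ ≠ 0) (s t : ℤ)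
    (h1 : 0 < qit θ (s - t)) (h2 : 0 < qit θ (s - t + 1))
    (h3 : 0 < qit θ (s - t - 1)) (h4 : 0 < qit θ (s + t))
    (h5 : 0 < qit θ (s + t + 1)) (h6 : 0 < qit θ (s + t + 2))
    (h7 : 0 < fpw θ s t) (h8 : 0 < fpw θ (s + 1) t)
    (h9 : 0 < fpw θ s (t + 1)) (h10 : 0 < fpw θ (s + 1) (t + 1)) :
    Umat θ s t * Bmat θ s t = qit θ 2 • Bmat θ s t := by
  have f0 : fpw θ s t = qit θ s * qit θ t * qit θ (s - t) * qit θ (s + t) := rfl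
  have f1 : fpw θ (s + 1) t
      = qit θ (s + 1) * qit θ t * qit θ (s - t + 1) * qit θ (s + t + 1) := by
    unfold fpw; rw [show s + 1 - t = s - t + 1 by ring, show s + 1 + t = s + t + 1 by ring]
  have f2 : fpw θ s (t + 1)
      = qit θ s * qit θ (t + 1) * qit θ (s - t - 1) * qit θ (s + t + 1) := by
    unfold fpw; rw [show s - (t + 1) = s - t - 1 by ring, show s + (t + 1) = s + t + 1 by ring]
  have f3 : fpw θ (s + 1) (t + 1)
      = qit θ (s + 1) * qit θ (t + 1) * qit θ (s - t) * qit θ (s + t + 2) := by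
    unfold fpw; rw [show s + 1 - (t + 1) = s - t by ring, show s + 1 + (t + 1) = s + t + 2 by ring]
  -- nonvanishing of individual quantum integers
  have hST : qit θ s * qit θ t ≠ 0 := by
    rw [f0] at h7
    intro h
    rw [h] at h7; simp at h7
  have hS1T1 : qit θ (s + 1) * qit θ (t + 1) ≠ 0 := by
    rw [f3] at h10
    intro h
    rw [h] at h10; simp at h10
  have hS : qit θ s ≠ 0 := left_ne_zero_of_mul hST
  have hT : qit θ t ≠ 0 := right_ne_zero_of_mul hST
  have hS1 : qit θ (s + 1) ≠ 0 := left_ne_zero_of_mul hS1T1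
  have hT1 : qit θ (t + 1) ≠ 0 := right_ne_zero_of_mul hS1T1
  -- key scalar identities
  have k1 : qit θ 2 * qit θ (s - t) = qit θ (s - t + 1) + qit θ (s - t - 1) :=
    qit_two_mul θ (s - t)
  have k3 : Real.sqrt (qit θ (s - t + 1) * qit θ (s - t - 1)) ^ 2
      = qit θ (s - t + 1) * qit θ (s - t - 1) :=
    Real.sq_sqrt (by positivity)
  set Y : ℝ := (Real.sqrt (qit θ (s + t) * qit θ (s + t + 2)) / qit θ (s + t + 1)) *
      Real.sqrt (fpw θ (s + 1) t * fpw θ s (t + 1)) / fpw θ s t with hY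
  set X : ℝ := Real.sqrt (fpw θ (s + 1) (t + 1) / fpw θ s t) with hX
  have k2 : qit θ (s - t) * Y = Real.sqrt (qit θ (s - t + 1) * qit θ (s - t - 1)) * X := by
    have hL : 0 ≤ qit θ (s - t) * Y := by
      apply mul_nonneg h1.le
      rw [hY]
      exact div_nonneg (mul_nonneg (div_nonneg (Real.sqrt_nonneg _) h5.le)
        (Real.sqrt_nonneg _)) h7.le
    have hR : 0 ≤ Real.sqrt (qit θ (s - t + 1) * qit θ (s - t - 1)) * X :=
      mul_nonneg (Real.sqrt_nonneg _) (Real.sqrt_nonneg _)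
    have hsq : (qit θ (s - t) * Y) ^ 2
        = (Real.sqrt (qit θ (s - t + 1) * qit θ (s - t - 1)) * X) ^ 2 := by
      rw [hY, hX]
      simp only [mul_pow, div_pow]
      rw [Real.sq_sqrt (by positivity : (0:ℝ) ≤ qit θ (s + t) * qit θ (s + t + 2)),
        Real.sq_sqrt (mul_nonneg h8.le h9.le),
        Real.sq_sqrt (by positivity : (0:ℝ) ≤ qit θ (s - t + 1) * qit θ (s - t - 1)),
        Real.sq_sqrt (div_nonneg h10.le h7.le),
        f0, f1, f2, f3]
      field_simp
    calc qit θ (s - t) * Y = Real.sqrt ((qit θ (s - t) * Y) ^ 2) := (Real.sqrt_sq hL).symm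
      _ = Real.sqrt ((Real.sqrt (qit θ (s - t + 1) * qit θ (s - t - 1)) * X) ^ 2) := by rw [hsq]
      _ = Real.sqrt (qit θ (s - t + 1) * qit θ (s - t - 1)) * X := Real.sqrt_sq hR
  exact aux_mat (qit θ (s - t)) (qit θ (s - t + 1)) (qit θ (s - t - 1))
    (Real.sqrt (qit θ (s - t + 1) * qit θ (s - t - 1))) X Y (qit θ 2) h1.ne' k1 k2 k3
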